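/- Let c(n,p) be the number of compositions of n with all parts ≥ p, with c(0,p)=1, and let c(n,k,p,p-1) be the number of compositions of n with exactly k parts equal to p-1 and all other parts ≥ p. Then for positive integers n, p and nonnegative integer k: c(n+kp+1, k, p, p-1) = sum over all tuples (j_1,...,j_{k+1}) of integers ≥ -1 with j_1+...+j_{k+1} = n of the product c(j_1+1,p) * c(j_2+1,p) * ... * c(j_{k+1}+1,p). -/

import Mathlib

/-- `c n p`: the number of compositions of `n` all of whose parts are `≥ p`
(for `p ≥ 1` all parts are automatically positive); `c 0 p = 1` (the empty
composition). -/
noncomputable def c (n p : ℕ) : ℕ :=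
  Nat.card {l : List ℕ // (∀ x ∈ l, p ≤ x) ∧ l.sum = n}

/-- `cc n k p`: the number of compositions of `n` with exactly `k` parts equal
to `p - 1` and all other parts `≥ p`. -/
noncomputable def cc (n k p : ℕ) : ℕ :=
  Nat.card {l : List ℕ // l.sum = n ∧ l.count (p - 1) = k ∧
      ∀ x ∈ l, x = p - 1 ∨ p ≤ x}

namespace Stmt8Aux

lemma inter_cons₂ (x : ℕ) (a b : List ℕ) (L : List (List ℕ)) :
    [x].intercalate (a :: b :: L) = a ++ x :: [x].intercalate (b :: L) := by
  simp [List.intercalate, List.intersperse_cons_cons]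

lemma inter_singleton (x : ℕ) (a : List ℕ) : [x].intercalate [a] = a := by
  simp [List.intercalate]

lemma inter_sum (x : ℕ) : ∀ (L : List (List ℕ)) (a : List ℕ),
    ([x].intercalate (a :: L)).sum = ((a :: L).map List.sum).sum + L.length * x := by
  intro L
  induction L with
  | nil => intro a; simp [inter_singleton]
  | cons b L ih =>
      intro a
      rw [inter_cons₂, List.sum_append, List.sum_cons, ih b]
      simp [List.map_cons, List.sum_cons]
      ring

lemma inter_count (x : ℕ) : ∀ (L : List (List ℕ)) (a : List ℕ),
    (∀ pc ∈ a :: L, x ∉ pc) → ([x].intercalate (a :: L)).count x = L.length := by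
  intro L
  induction L with
  | nil =>
      intro a h
      rw [inter_singleton]
      simpa using List.count_eq_zero.2 (h a (by simp))
  | cons b L ih =>
      intro a h
      rw [inter_cons₂, List.count_append, List.count_cons]
      rw [List.count_eq_zero.2 (h a (by simp)), ih b (fun pc hpc => h pc (by simp at hpc ⊢; tauto))]
      simp

lemma inter_mem (x y : ℕ) : ∀ (L : List (List ℕ)) (a : List ℕ),
    y ∈ [x].intercalate (a :: L) → y = x ∨ ∃ pc ∈ a :: L, y ∈ pc := by
  intro L
  induction L with
  | nil => intro a h; rw [inter_singleton] at h; exact Or.inr ⟨a, by simp, h⟩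
  | cons b L ih =>
      intro a h
      rw [inter_cons₂, List.mem_append, List.mem_cons] at h
      rcases h with h | h | h
      · exact Or.inr ⟨a, by simp, h⟩
      · exact Or.inl h
      · rcases ih b h with h | ⟨pc, hpc, hy⟩
        · exact Or.inl h
        · exact Or.inr ⟨pc, by simp at hpc ⊢; tauto, hy⟩

lemma mem_inter (x y : ℕ) : ∀ (L : List (List ℕ)) (pc : List ℕ),
    pc ∈ L → y ∈ pc → y ∈ [x].intercalate L := by
  intro L
  induction L with
  | nil => simp
  | cons a L ih =>
      intro pc hpc hy
      cases L with
      | nil => simp at hpc; subst hpc; rwa [inter_singleton]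
      | cons b L' =>
          rw [inter_cons₂, List.mem_append]
          rcases List.mem_cons.1 hpc with rfl | hpc
          · exact Or.inl hy
          · exact Or.inr (List.mem_cons.2 (Or.inr (ih pc hpc hy)))

lemma splitOn_length (x : ℕ) : ∀ (l : List ℕ), (l.splitOn x).length = l.count x + 1 := by
  intro l
  induction l with
  | nil => simp
  | cons a l ih =>
      simp only [List.splitOn] at *
      rw [List.splitOnP_cons]
      by_cases h : a = x
      · simp [h, ih, List.count_cons]
      · have : (a == x) = false := by simp [h]
        simp [this, ih, List.count_cons, h]

lemma splitOn_not_mem (x : ℕ) : ∀ (l : List ℕ), ∀ pc ∈ l.splitOn x, x ∉ pc := by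
  intro l
  induction l with
  | nil => simp
  | cons a l ih =>
      simp only [List.splitOn] at *
      intro pc hpc
      rw [List.splitOnP_cons] at hpc
      by_cases h : a = x
      · simp [h] at hpc
        rcases hpc with rfl | hpc
        · simp
        · exact ih pc hpc
      · have hb : (a == x) = false := by simp [h]
        rw [hb] at hpc
        simp at hpc
        obtain ⟨hd, tl, hsp⟩ := List.exists_cons_of_ne_nil (List.splitOnP_ne_nil _ l)
        rw [hsp] at hpc
        simp [List.modifyHead] at hpc
        rcases hpc with rfl | hpc
        · intro hmem
          rcases List.mem_cons.1 hmem with rfl | hmem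
          · exact h rfl
          · exact ih hd (by rw [hsp]; simp) hmem
        · exact ih pc (by rw [hsp]; simp [hpc])

lemma finite_bdd (Lb M : ℕ) : {l : List ℕ | l.length ≤ Lb ∧ ∀ x ∈ l, x ≤ M}.Finite := by
  apply Set.Finite.subset ((List.finite_length_le (Fin (M + 1)) Lb).image (List.map Fin.val))
  rintro l ⟨hlen, hmem⟩
  refine ⟨l.pmap (fun x hx => (⟨x, hx⟩ : Fin (M + 1)))
      (fun x hx => Nat.lt_succ_of_le (hmem x hx)), ?_, ?_⟩
  · simpa using hlen
  · simp [List.map_pmap]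

lemma length_le_aux (q : ℕ) : ∀ l : List ℕ, (∀ x ∈ l, x = q ∨ 0 < x) →
    l.length ≤ l.count q + l.sum := by
  intro l
  induction l with
  | nil => simp
  | cons a l ih =>
      intro h
      have hl := ih (fun x hx => h x (by simp [hx]))
      have h2 : (a :: l).sum = a + l.sum := by simp
      rcases h a (by simp) with rfl | ha
      · have h1 : (a :: l).count a = l.count a + 1 := by simp [List.count_cons]
        simp only [List.length_cons]
        omega
      · have h1 : l.count q ≤ (a :: l).count q := List.count_le_count_cons
        simp only [List.length_cons]
        omega

lemma length_le_sum : ∀ l : List ℕ, (∀ x ∈ l, 1 ≤ x) → l.length ≤ l.sum := by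
  intro l
  induction l with
  | nil => simp
  | cons a l ih =>
      intro h
      have := ih (fun x hx => h x (by simp [hx]))
      have := h a (by simp)
      simp only [List.length_cons, List.sum_cons]
      omega

end Stmt8Aux

open Stmt8Aux in
/-- `c(n+kp+1, k, p, p-1) = ∑ c(j₁+1,p) ⋯ c(j_{k+1}+1,p)` over all tuples of
integers `jₜ ≥ -1` with `j₁ + ⋯ + j_{k+1} = n`.  Substituting `fₜ = jₜ + 1 ≥ 0`,
the tuples are exactly those `f : Fin (k+1) → ℕ` with `∑ f = n + k + 1`. -/
theorem stmt8 (n p k : ℕ) (hn : 0 < n) (hp : 0 < p) :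
    cc (n + k * p + 1) k p =
      ∑ f ∈ Finset.Nat.antidiagonalTuple (k + 1) (n + k + 1),
        ∏ t : Fin (k + 1), c (f t) p := by
  classical
  obtain ⟨q, rfl⟩ : ∃ q, p = q + 1 := ⟨p - 1, (Nat.succ_pred_eq_of_pos hp).symm⟩
  set N : ℕ := n + k * (q + 1) + 1 with hNdef
  set P : List ℕ → Prop := fun l => l.sum = N ∧ l.count q = k ∧ ∀ x ∈ l, x = q ∨ q + 1 ≤ x
    with hP
  -- finiteness of the `cc` set
  have hfinA : Finite {l : List ℕ // P l} := by
    have hsub : {l : List ℕ | P l} ⊆ {l | l.length ≤ k + N ∧ ∀ x ∈ l, x ≤ N} := by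
      rintro l ⟨h1, h2, h3⟩
      constructor
      · have := length_le_aux q l (fun x hx => by rcases h3 x hx with rfl | h <;> omega)
        omega
      · intro x hx
        have := List.single_le_sum (l := l) (by simp) x hx
        omega
    exact ((finite_bdd (k + N) N).subset hsub).to_subtype
  -- finiteness of the `c` sets
  have hfinS : ∀ m : ℕ, Finite {l : List ℕ // (∀ x ∈ l, q + 1 ≤ x) ∧ l.sum = m} := by
    intro m
    have hsub : {l : List ℕ | (∀ x ∈ l, q + 1 ≤ x) ∧ l.sum = m} ⊆
        {l | l.length ≤ m ∧ ∀ x ∈ l, x ≤ m} := by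
      rintro l ⟨h1, h2⟩
      constructor
      · have := length_le_sum l (fun x hx => by have := h1 x hx; omega)
        omega
      · intro x hx
        have := List.single_le_sum (l := l) (by simp) x hx
        omega
    exact ((finite_bdd m m).subset hsub).to_subtype
  haveI : Fintype {l : List ℕ // P l} := Fintype.ofFinite _
  -- the fiber map
  set F : {l : List ℕ // P l} → (Fin (k + 1) → ℕ) :=
    fun a t => ((a.1.splitOn q).getD t []).sum with hF
  have hLen : ∀ a : {l : List ℕ // P l}, (a.1.splitOn q).length = k + 1 := by
    intro a; rw [splitOn_length, a.2.2.1]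
  have key1 : ∀ a : {l : List ℕ // P l},
      ((a.1.splitOn q).map List.sum).sum + k * q = N := by
    intro a
    obtain ⟨a0, L0, hL0⟩ := List.exists_cons_of_ne_nil
      (show a.1.splitOn q ≠ [] from by
        intro h; have := hLen a; rw [h] at this; simp at this)
    have hk : L0.length = k := by
      have := hLen a; rw [hL0] at this; simpa using this
    have hs := inter_sum q L0 a0
    rw [← hL0, List.intercalate_splitOn, a.2.1, hL0, hk] at hs
    rw [hL0]
    omega
  have hFmem : ∀ a : {l : List ℕ // P l},
      F a ∈ Finset.Nat.antidiagonalTuple (k + 1) (n + k + 1) := by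
    intro a
    rw [Finset.Nat.mem_antidiagonalTuple]
    have heq : (List.ofFn fun t : Fin (k + 1) => (a.1.splitOn q).getD ↑t []) =
        a.1.splitOn q := by
      apply List.ext_getElem (by simp [hLen a])
      intro i h1 h2
      rw [List.getElem_ofFn]
      exact List.getD_eq_getElem _ _ h2
    have hmap : ((a.1.splitOn q).map List.sum).sum = ∑ t : Fin (k + 1), F a t := by
      conv_lhs => rw [← heq]
      rw [List.map_ofFn, List.sum_ofFn]
      rfl
    have h1 := key1 a
    rw [hmap] at h1
    have h2 : k * (q + 1) = k * q + k := by ring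
    rw [hNdef, h2] at h1
    omega
  -- fiber cardinalities
  have fiberCard : ∀ f ∈ Finset.Nat.antidiagonalTuple (k + 1) (n + k + 1),
      (Finset.univ.filter (fun a => F a = f)).card = ∏ t : Fin (k + 1), c (f t) (q + 1) := by
    intro f hf
    rw [Finset.Nat.mem_antidiagonalTuple] at hf
    have hpieces : ∀ (g : ∀ t : Fin (k + 1),
        {l : List ℕ // (∀ x ∈ l, q + 1 ≤ x) ∧ l.sum = f t}),
        ∀ pc ∈ List.ofFn (fun t => (g t).1), q ∉ pc := by
      intro g pc hpc hqpc
      rw [List.mem_ofFn] at hpc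
      obtain ⟨i, rfl⟩ := hpc
      have := (g i).2.1 q hqpc
      omega
    have hnil : ∀ (g : ∀ t : Fin (k + 1),
        {l : List ℕ // (∀ x ∈ l, q + 1 ≤ x) ∧ l.sum = f t}),
        List.ofFn (fun t => (g t).1) ≠ [] := by
      intro g h
      have := congrArg List.length h
      simp at this
    have e : {a : {l : List ℕ // P l} // F a = f} ≃
        ∀ t : Fin (k + 1), {l : List ℕ // (∀ x ∈ l, q + 1 ≤ x) ∧ l.sum = f t} := by
      refine
        { toFun := fun ap t => ⟨(ap.1.1.splitOn q).getD t [], ?_, ?_⟩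
          invFun := fun g => ⟨⟨[q].intercalate (List.ofFn fun t => (g t).1), ?_, ?_, ?_⟩, ?_⟩
          left_inv := ?_
          right_inv := ?_ }
      · -- all parts of the piece are ≥ q + 1
        intro y hy
        have ht : (t : ℕ) < (ap.1.1.splitOn q).length := by rw [hLen]; exact t.2
        rw [List.getD_eq_getElem _ _ ht] at hy
        have hpc : (ap.1.1.splitOn q)[(t : ℕ)] ∈ ap.1.1.splitOn q := List.getElem_mem ht
        have hyl : y ∈ ap.1.1 := by
          have := mem_inter q y (ap.1.1.splitOn q) _ hpc hy
          rwa [List.intercalate_splitOn] at this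
        have hne : y ≠ q := fun h => splitOn_not_mem q ap.1.1 _ hpc (h ▸ hy)
        rcases ap.1.2.2.2 y hyl with rfl | h
        · exact absurd rfl hne
        · exact h
      · -- the piece sums to f t
        exact congrFun ap.2 t
      · -- sum of the interleaved list
        obtain ⟨a0, L0, hL0⟩ := List.exists_cons_of_ne_nil (hnil g)
        rw [hL0, inter_sum, ← hL0]
        have hmap : ((List.ofFn fun t => (g t).1).map List.sum).sum = n + k + 1 := by
          rw [List.map_ofFn, List.sum_ofFn]
          rw [← hf]
          exact Finset.sum_congr rfl fun t _ => (g t).2.2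
        have hk : L0.length = k := by
          have : (List.ofFn fun t => (g t).1).length = k + 1 := by simp
          rw [hL0] at this; simpa using this
        rw [hmap, hk]
        have h2 : k * (q + 1) = k * q + k := by ring
        omega
      · -- count of q
        obtain ⟨a0, L0, hL0⟩ := List.exists_cons_of_ne_nil (hnil g)
        rw [hL0, inter_count q L0 a0 (hL0 ▸ hpieces g)]
        have : (List.ofFn fun t => (g t).1).length = k + 1 := by simp
        rw [hL0] at this; simpa using this
      · -- membership condition
        intro y hy
        obtain ⟨a0, L0, hL0⟩ := List.exists_cons_of_ne_nil (hnil g)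
        rw [hL0] at hy
        rcases inter_mem q y L0 a0 hy with rfl | ⟨pc, hpc, hy'⟩
        · exact Or.inl rfl
        · rw [← hL0, List.mem_ofFn] at hpc
          obtain ⟨i, rfl⟩ := hpc
          exact Or.inr ((g i).2.1 y hy')
      · -- F of the interleaved list is f
        funext t
        show ((([q].intercalate (List.ofFn fun s => (g s).1)).splitOn q).getD ↑t []).sum = f t
        rw [List.splitOn_intercalate (x := q) (hx := hpieces g) (hls := hnil g)]
        have ht : (t : ℕ) < (List.ofFn fun s => (g s).1).length := by simp; omega
        rw [List.getD_eq_getElem _ _ ht]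
        simp only [List.getElem_ofFn, Fin.eta]
        exact (g t).2.2
      · -- left inverse
        intro ap
        apply Subtype.ext
        apply Subtype.ext
        show [q].intercalate (List.ofFn fun t : Fin (k + 1) =>
          (ap.1.1.splitOn q).getD ↑t []) = ap.1.1
        have heq : (List.ofFn fun t : Fin (k + 1) => (ap.1.1.splitOn q).getD ↑t []) =
            ap.1.1.splitOn q := by
          apply List.ext_getElem (by simp [hLen ap.1])
          intro i h1 h2
          rw [List.getElem_ofFn]
          exact List.getD_eq_getElem _ _ h2
        rw [heq, List.intercalate_splitOn]
      · -- right inverse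
        intro g
        funext t
        apply Subtype.ext
        show (([q].intercalate (List.ofFn fun s => (g s).1)).splitOn q).getD ↑t [] = (g t).1
        rw [List.splitOn_intercalate (x := q) (hx := hpieces g) (hls := hnil g)]
        have ht : (t : ℕ) < (List.ofFn fun s => (g s).1).length := by simp; omega
        rw [List.getD_eq_getElem _ _ ht]
        simp only [List.getElem_ofFn, Fin.eta]
    calc (Finset.univ.filter (fun a => F a = f)).card
        = Fintype.card {a : {l : List ℕ // P l} // F a = f} := (Fintype.card_subtype _).symm
      _ = Nat.card {a : {l : List ℕ // P l} // F a = f} := Nat.card_eq_fintype_card.symm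
      _ = Nat.card (∀ t : Fin (k + 1),
            {l : List ℕ // (∀ x ∈ l, q + 1 ≤ x) ∧ l.sum = f t}) := Nat.card_congr e
      _ = ∏ t : Fin (k + 1),
            Nat.card {l : List ℕ // (∀ x ∈ l, q + 1 ≤ x) ∧ l.sum = f t} := Nat.card_pi
      _ = ∏ t : Fin (k + 1), c (f t) (q + 1) := rfl
  have hcc : cc N k (q + 1) = Nat.card {l : List ℕ // P l} := rfl
  rw [hcc, Nat.card_eq_fintype_card, ← Finset.card_univ,
    Finset.card_eq_sum_card_fiberwise (fun a _ => hFmem a)]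
  exact Finset.sum_congr rfl fiberCard
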